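/- Let (X, γ) be a generalized Minkowski space. The following are equivalent: (a) γ is a norm, i.e., γ(−x) = γ(x) for all x ∈ X; (b) for any two distinct points x, y ∈ X, ft({x,y}) has more than one element; (c) for any two distinct points x, y ∈ X, ft({x,y}) is infinite; (d) for any two distinct x, y, ft({x,y}) \ {x} ≠ ∅; (e) for any two distinct x, y, ft({x,y}) \ {x,y} ≠ ∅; (f) for any two distinct x, y, x ∈ ft({x,y}); (g) for any two distinct x, y, {x,y} ⊆ ft({x,y}); (h) for any two distinct x, y, [x,y] ⊆ ft({x,y}); (i) for any two distinct x, y, the relative interior of [x,y] meets ft({x,y}); (j) for any two distinct x, y, [x,y]_γ ⊆ ft({x,y}); (k) for any two distinct x, y, the relative interior of [x,y]_γ meets ft({x,y}); (l) for any two distinct x, y, [x,y]_γ = ft({x,y}). -/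

import Mathlib

/-- A gauge on a real vector space: nonnegative, definite at `0`, positively homogeneous,
and subadditive. -/
def IsGauge {X : Type*} [AddCommGroup X] [Module ℝ X] (γ : X → ℝ) : Prop :=
  (∀ x, 0 ≤ γ x) ∧ (∀ x : X, γ x = 0 → x = 0) ∧
    (∀ (l : ℝ) (x : X), 0 ≤ l → γ (l • x) = l * γ x) ∧
    ∀ x y, γ (x + y) ≤ γ x + γ y

/-- The Fermat–Torricelli locus of the two points `x, y`: the set of minimizers of
`z ↦ γ(x - z) + γ(y - z)`. -/
def ftTwo {X : Type*} [AddCommGroup X] [Module ℝ X] (γ : X → ℝ) (x y : X) : Set X :=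
  {z : X | ∀ w : X, γ (x - z) + γ (y - z) ≤ γ (x - w) + γ (y - w)}

/-- The `γ`-segment `[x,y]_γ = {z : γ(x-z) + γ(z-y) = γ(x-y)}`. -/
def gammaSeg {X : Type*} [AddCommGroup X] [Module ℝ X] (γ : X → ℝ) (x y : X) : Set X :=
  {z : X | γ (x - z) + γ (z - y) = γ (x - y)}

section Aux

variable {X : Type*} [NormedAddCommGroup X] [NormedSpace ℝ X] {γ : X → ℝ}

lemma IsGauge.zero' (hγ : IsGauge γ) : γ 0 = 0 := by
  simpa using hγ.2.2.1 0 0 le_rfl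

lemma IsGauge.tri (hγ : IsGauge γ) (x z y : X) : γ (x - y) ≤ γ (x - z) + γ (z - y) := by
  simpa using hγ.2.2.2 (x - z) (z - y)

lemma IsGauge.pos (hγ : IsGauge γ) {x : X} (hx : x ≠ 0) : 0 < γ x :=
  lt_of_le_of_ne (hγ.1 x) fun h => hx (hγ.2.1 x h.symm)

lemma left_mem_gammaSeg (hγ : IsGauge γ) (x y : X) : x ∈ gammaSeg γ x y := by
  simp [gammaSeg, hγ.zero']

lemma right_mem_gammaSeg (hγ : IsGauge γ) (x y : X) : y ∈ gammaSeg γ x y := by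
  simp [gammaSeg, hγ.zero']

lemma segment_subset_gammaSeg (hγ : IsGauge γ) (x y : X) :
    segment ℝ x y ⊆ gammaSeg γ x y := by
  rw [segment_eq_image']
  rintro _ ⟨θ, ⟨h0, h1⟩, rfl⟩
  have e1 : x - (x + θ • (y - x)) = θ • (x - y) := by module
  have e2 : x + θ • (y - x) - y = (1 - θ) • (x - y) := by module
  show γ _ + γ _ = γ _
  rw [e1, e2, hγ.2.2.1 θ _ h0, hγ.2.2.1 (1 - θ) _ (by linarith)]
  ring

lemma gammaSeg_convex (hγ : IsGauge γ) (x y : X) : Convex ℝ (gammaSeg γ x y) := by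
  intro a ha b hb s t hs ht hst
  have ht' : t = 1 - s := by linarith
  subst ht'
  have ha' : γ (x - a) + γ (a - y) = γ (x - y) := ha
  have hb' : γ (x - b) + γ (b - y) = γ (x - y) := hb
  have e1 : x - (s • a + (1 - s) • b) = s • (x - a) + (1 - s) • (x - b) := by module
  have e2 : s • a + (1 - s) • b - y = s • (a - y) + (1 - s) • (b - y) := by module
  have h1 : γ (x - (s • a + (1 - s) • b)) ≤ s * γ (x - a) + (1 - s) * γ (x - b) := by
    rw [e1]
    calc γ _ ≤ γ (s • (x - a)) + γ ((1 - s) • (x - b)) := hγ.2.2.2 _ _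
      _ = _ := by rw [hγ.2.2.1 _ _ hs, hγ.2.2.1 _ _ ht]
  have h2 : γ (s • a + (1 - s) • b - y) ≤ s * γ (a - y) + (1 - s) * γ (b - y) := by
    rw [e2]
    calc γ _ ≤ γ (s • (a - y)) + γ ((1 - s) • (b - y)) := hγ.2.2.2 _ _
      _ = _ := by rw [hγ.2.2.1 _ _ hs, hγ.2.2.1 _ _ ht]
  have key : s * γ (x - a) + s * γ (a - y) + (1 - s) * γ (x - b) + (1 - s) * γ (b - y)
      = γ (x - y) := by linear_combination s * ha' + (1 - s) * hb'
  have hlow := hγ.tri x (s • a + (1 - s) • b) y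
  show γ _ + γ _ = γ _
  apply le_antisymm _ hlow
  linarith [h1, h2]

lemma gammaSeg_eq_ftTwo (hγ : IsGauge γ) (hsym : ∀ x : X, γ (-x) = γ x) (x y : X) :
    gammaSeg γ x y = ftTwo γ x y := by
  have hswap : ∀ a b : X, γ (a - b) = γ (b - a) := fun a b => by
    rw [← hsym (b - a), neg_sub]
  ext z
  constructor
  · intro hz w
    have hz' : γ (x - z) + γ (z - y) = γ (x - y) := hz
    rw [hswap y z, hswap y w, hz']
    exact hγ.tri x w y
  · intro hz
    have h1 := hz x
    simp only [sub_self, hγ.zero', zero_add] at h1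
    have e1 : γ (y - z) = γ (z - y) := hswap y z
    have e2 : γ (y - x) = γ (x - y) := hswap y x
    show γ (x - z) + γ (z - y) = γ (x - y)
    exact le_antisymm (by linarith) (hγ.tri x z y)

lemma exists_forward (s : Set X) {z p : X} (hz : z ∈ intrinsicInterior ℝ s) (hp : p ∈ s) :
    ∃ t : ℝ, 0 < t ∧ z + t • (z - p) ∈ s := by
  obtain ⟨u, hu, huz⟩ := hz
  have hzA : z ∈ affineSpan ℝ s := huz ▸ u.2
  have hpA : p ∈ affineSpan ℝ s := subset_affineSpan ℝ s hp
  have hmem : ∀ t : ℝ, z + t • (z - p) ∈ affineSpan ℝ s := fun t => by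
    have := AffineSubspace.smul_vsub_vadd_mem (affineSpan ℝ s) t hzA hpA hzA
    simpa [vsub_eq_sub, vadd_eq_add, add_comm] using this
  set c : ℝ → affineSpan ℝ s := fun t => ⟨z + t • (z - p), hmem t⟩ with hcdef
  have hcont : Continuous c := by
    apply Continuous.subtype_mk
    fun_prop
  have hc0 : c 0 = u := Subtype.ext (by simp [hcdef, ← huz])
  have hnhds : c ⁻¹' interior (Subtype.val ⁻¹' s) ∈ nhds (0 : ℝ) := by
    apply hcont.continuousAt.preimage_mem_nhds
    rw [hc0]
    exact isOpen_interior.mem_nhds hu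
  obtain ⟨ε, hε, hball⟩ := Metric.mem_nhds_iff.mp hnhds
  refine ⟨ε / 2, by positivity, ?_⟩
  have hmem2 : c (ε / 2) ∈ interior (Subtype.val ⁻¹' s) := by
    apply hball
    rw [Metric.mem_ball, dist_zero_right, Real.norm_eq_abs, abs_of_pos (half_pos hε)]
    linarith
  have h5 : c (ε / 2) ∈ Subtype.val ⁻¹' s := interior_subset hmem2
  exact h5

lemma ne_of_intrinsic_gammaSeg (hγ : IsGauge γ) {x y z : X} (hxy : x ≠ y)
    (hz : z ∈ intrinsicInterior ℝ (gammaSeg γ x y)) : z ≠ x ∧ z ≠ y := by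
  constructor
  · rintro rfl
    obtain ⟨t, ht, hw⟩ := exists_forward _ hz (right_mem_gammaSeg hγ z y)
    have hw' : γ (z - (z + t • (z - y))) + γ (z + t • (z - y) - y) = γ (z - y) := hw
    have e1 : z - (z + t • (z - y)) = t • (y - z) := by module
    have e2 : z + t • (z - y) - y = (1 + t) • (z - y) := by module
    rw [e1, e2, hγ.2.2.1 _ _ ht.le, hγ.2.2.1 _ _ (by linarith : (0:ℝ) ≤ 1 + t)] at hw'
    have hpos : 0 < γ (z - y) := hγ.pos (sub_ne_zero.mpr hxy)
    nlinarith [mul_pos ht hpos, mul_nonneg ht.le (hγ.1 (y - z))]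
  · rintro rfl
    obtain ⟨t, ht, hw⟩ := exists_forward _ hz (left_mem_gammaSeg hγ x z)
    have hw' : γ (x - (z + t • (z - x))) + γ (z + t • (z - x) - z) = γ (x - z) := hw
    have e1 : x - (z + t • (z - x)) = (1 + t) • (x - z) := by module
    have e2 : z + t • (z - x) - z = t • (z - x) := by module
    rw [e1, e2, hγ.2.2.1 _ _ (by linarith : (0:ℝ) ≤ 1 + t), hγ.2.2.1 _ _ ht.le] at hw'
    have hpos : 0 < γ (x - z) := hγ.pos (sub_ne_zero.mpr hxy)
    nlinarith [mul_pos ht hpos, mul_nonneg ht.le (hγ.1 (z - x))]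

lemma ne_of_intrinsic_segment {x y z : X} (hxy : x ≠ y)
    (hz : z ∈ intrinsicInterior ℝ (segment ℝ x y)) : z ≠ x ∧ z ≠ y := by
  constructor
  · rintro rfl
    obtain ⟨t, ht, hw⟩ := exists_forward _ hz (right_mem_segment ℝ z y)
    rw [segment_eq_image'] at hw
    obtain ⟨θ, ⟨h0, h1⟩, he⟩ := hw
    have h2 : θ • (y - z) = t • (z - y) := add_left_cancel he
    have h3 : θ • (y - z) = (-t) • (y - z) := by rw [h2]; module
    have h4 : θ = -t := smul_left_injective ℝ (sub_ne_zero.mpr (Ne.symm hxy)) h3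
    linarith
  · rintro rfl
    obtain ⟨t, ht, hw⟩ := exists_forward _ hz (left_mem_segment ℝ x z)
    rw [segment_eq_image'] at hw
    obtain ⟨θ, ⟨h0, h1⟩, he⟩ := hw
    have e : z + t • (z - x) = x + (1 + t) • (z - x) := by module
    rw [e] at he
    have h2 : θ • (z - x) = (1 + t) • (z - x) := add_left_cancel he
    have h4 : θ = 1 + t := smul_left_injective ℝ (sub_ne_zero.mpr (Ne.symm hxy)) h2
    linarith

lemma segment_infinite' {x y : X} (hxy : x ≠ y) : (segment ℝ x y).Infinite := by
  rw [segment_eq_image']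
  have hinj : Set.InjOn (fun θ : ℝ => x + θ • (y - x)) (Set.Icc 0 1) := by
    intro a _ b _ hab
    exact smul_left_injective ℝ (sub_ne_zero.mpr (Ne.symm hxy)) (add_left_cancel hab)
  exact (Set.infinite_image_iff hinj).2 (Set.Icc_infinite (by norm_num))

lemma symm_of_four [FiniteDimensional ℝ X] (hγ : IsGauge γ)
    (h4 : ∀ x y : X, x ≠ y → (ftTwo γ x y \ {x}).Nonempty) :
    ∀ x : X, γ (-x) = γ x := by
  rcases subsingleton_or_nontrivial X with hX | hX
  · intro x; rw [Subsingleton.elim (-x) x]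
  have hconv : ConvexOn ℝ (Set.univ : Set X) γ := by
    refine ⟨convex_univ, fun a _ b _ s t hs ht hst => ?_⟩
    calc γ (s • a + t • b) ≤ γ (s • a) + γ (t • b) := hγ.2.2.2 _ _
      _ = s * γ a + t * γ b := by rw [hγ.2.2.1 _ _ hs, hγ.2.2.1 _ _ ht]
      _ = s • γ a + t • γ b := rfl
  have hcont : Continuous γ := by
    rw [← continuousOn_univ]
    exact hconv.continuousOn isOpen_univ
  have hsc : IsCompact (Metric.sphere (0 : X) 1) := isCompact_sphere 0 1
  have hsn : (Metric.sphere (0 : X) 1).Nonempty := NormedSpace.sphere_nonempty.mpr zero_le_one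
  have hrc : ContinuousOn (fun w => γ w / γ (-w)) (Metric.sphere (0 : X) 1) := by
    apply ContinuousOn.div hcont.continuousOn (hcont.comp continuous_neg).continuousOn
    intro w hw
    have hw0 : w ≠ 0 := by
      intro h; rw [h] at hw; simp at hw
    exact (hγ.pos (neg_ne_zero.mpr hw0)).ne'
  obtain ⟨u, hu, hmax⟩ := hsc.exists_isMaxOn hsn hrc
  have hu0 : u ≠ 0 := by intro h; rw [h] at hu; simp at hu
  set S := γ u / γ (-u) with hSdef
  have hnegu : 0 < γ (-u) := hγ.pos (neg_ne_zero.mpr hu0)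
  have hSu : γ u = S * γ (-u) := by
    rw [hSdef, div_mul_cancel₀ _ hnegu.ne']
  have hS : ∀ w : X, γ w ≤ S * γ (-w) := by
    intro w
    rcases eq_or_ne w 0 with rfl | hw0
    · simp [hγ.zero']
    · have hn : (0:ℝ) < ‖w‖ := norm_pos_iff.mpr hw0
      set v := ‖w‖⁻¹ • w with hv
      have hv1 : v ∈ Metric.sphere (0 : X) 1 := by
        simp [hv, norm_smul, abs_of_pos (inv_pos.mpr hn), inv_mul_cancel₀ hn.ne']
      have hv0 : v ≠ 0 := by
        intro h; rw [h] at hv1; simp at hv1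
      have hnegv : 0 < γ (-v) := hγ.pos (neg_ne_zero.mpr hv0)
      have hvle : γ v ≤ S * γ (-v) := (div_le_iff₀ hnegv).mp (hmax hv1)
      have hwv : ‖w‖ • v = w := smul_inv_smul₀ hn.ne' w
      have e1 : γ w = ‖w‖ * γ v := by rw [← hγ.2.2.1 _ _ hn.le, hwv]
      have e2 : γ (-w) = ‖w‖ * γ (-v) := by rw [← hγ.2.2.1 _ _ hn.le, smul_neg, hwv]
      rw [e1, e2]
      calc ‖w‖ * γ v ≤ ‖w‖ * (S * γ (-v)) := by
            exact mul_le_mul_of_nonneg_left hvle hn.le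
        _ = S * (‖w‖ * γ (-v)) := by ring
  rcases le_or_gt S 1 with hS1 | hS1
  · have hle : ∀ w : X, γ w ≤ γ (-w) := fun w => by
      nlinarith [hS w, hγ.1 (-w)]
    intro x
    exact le_antisymm (by simpa using hle (-x)) (hle x)
  · exfalso
    obtain ⟨z, hzf, hzne⟩ := h4 u 0 hu0
    have hzu : z ≠ u := by simpa using hzne
    have hmin : γ (u - z) + γ (-z) ≤ γ (-u) := by
      have := hzf u
      simpa [hγ.zero', sub_self, zero_sub] using this
    have htri : γ u ≤ γ (u - z) + γ z := by
      simpa using hγ.2.2.2 (u - z) z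
    have h1 := hS z
    have h2 : S * (γ (u - z) + γ (-z)) ≤ S * γ (-u) :=
      mul_le_mul_of_nonneg_left hmin (by linarith)
    have h3 : γ (u - z) ≤ 0 := by nlinarith [hγ.1 (u - z), hγ.1 (-z)]
    have h30 : γ (u - z) = 0 := le_antisymm h3 (hγ.1 _)
    exact hzu (sub_eq_zero.mp (hγ.2.1 _ h30)).symm

end Aux

/-- Characterizations of norms among gauges via the Fermat–Torricelli locus of two points. -/
theorem norm_tfae_fermatTorricelli_two_points
    {X : Type*} [NormedAddCommGroup X] [NormedSpace ℝ X] [FiniteDimensional ℝ X]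
    (γ : X → ℝ) (hγ : IsGauge γ) :
    List.TFAE
      [ (∀ x : X, γ (-x) = γ x),
        (∀ x y : X, x ≠ y → (ftTwo γ x y).Nontrivial),
        (∀ x y : X, x ≠ y → (ftTwo γ x y).Infinite),
        (∀ x y : X, x ≠ y → (ftTwo γ x y \ {x}).Nonempty),
        (∀ x y : X, x ≠ y → (ftTwo γ x y \ {x, y}).Nonempty),
        (∀ x y : X, x ≠ y → x ∈ ftTwo γ x y),
        (∀ x y : X, x ≠ y → {x, y} ⊆ ftTwo γ x y),
        (∀ x y : X, x ≠ y → segment ℝ x y ⊆ ftTwo γ x y),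
        (∀ x y : X, x ≠ y → (intrinsicInterior ℝ (segment ℝ x y) ∩ ftTwo γ x y).Nonempty),
        (∀ x y : X, x ≠ y → gammaSeg γ x y ⊆ ftTwo γ x y),
        (∀ x y : X, x ≠ y → (intrinsicInterior ℝ (gammaSeg γ x y) ∩ ftTwo γ x y).Nonempty),
        (∀ x y : X, x ≠ y → gammaSeg γ x y = ftTwo γ x y) ] := by
  tfae_have 1 → 12 := fun h1 x y _ => gammaSeg_eq_ftTwo hγ h1 x y
  tfae_have 12 → 10 := fun h x y hxy => (h x y hxy).subset
  tfae_have 10 → 6 := fun h x y hxy => h x y hxy (left_mem_gammaSeg hγ x y)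
  tfae_have 6 → 1 := by
    intro h6 v
    rcases eq_or_ne v 0 with rfl | hv
    · simp
    · have key : ∀ u : X, u ≠ 0 → γ u ≤ γ (-u) := by
        intro u hu
        have h := h6 0 u (Ne.symm hu) u
        simpa [hγ.zero'] using h
      exact le_antisymm (by simpa using key (-v) (neg_ne_zero.mpr hv)) (key v hv)
  tfae_have 12 → 8 := fun h x y hxy => (h x y hxy) ▸ segment_subset_gammaSeg hγ x y
  tfae_have 8 → 7 := by
    intro h x y hxy
    rw [Set.insert_subset_iff]
    exact ⟨h x y hxy (left_mem_segment ℝ x y),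
      Set.singleton_subset_iff.2 (h x y hxy (right_mem_segment ℝ x y))⟩
  tfae_have 7 → 6 := fun h x y hxy => h x y hxy (Set.mem_insert x {y})
  tfae_have 12 → 3 := fun h x y hxy =>
    (segment_infinite' hxy).mono ((h x y hxy) ▸ segment_subset_gammaSeg hγ x y)
  tfae_have 3 → 2 := fun h x y hxy => (h x y hxy).nontrivial
  tfae_have 2 → 4 := by
    intro h x y hxy
    obtain ⟨a, ha, b, hb, hab⟩ := h x y hxy
    rcases eq_or_ne a x with rfl | hax
    · exact ⟨b, hb, by simpa using Ne.symm hab⟩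
    · exact ⟨a, ha, by simpa using hax⟩
  tfae_have 4 → 1 := fun h => symm_of_four hγ h
  tfae_have 12 → 5 := by
    intro h x y hxy
    refine ⟨midpoint ℝ x y,
      (h x y hxy) ▸ segment_subset_gammaSeg hγ x y (midpoint_mem_segment x y), ?_⟩
    simp only [Set.mem_insert_iff, Set.mem_singleton_iff, not_or]
    exact ⟨fun hc => hxy ((midpoint_eq_left_iff (R := ℝ)).mp hc),
      fun hc => hxy ((midpoint_eq_right_iff (R := ℝ)).mp hc)⟩
  tfae_have 5 → 4 := by
    intro h x y hxy
    obtain ⟨z, hz, hz2⟩ := h x y hxy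
    simp only [Set.mem_insert_iff, Set.mem_singleton_iff, not_or] at hz2
    exact ⟨z, hz, by simpa using hz2.1⟩
  tfae_have 12 → 9 := by
    intro h x y hxy
    obtain ⟨z, hz⟩ :=
      Set.Nonempty.intrinsicInterior (convex_segment x y) ⟨x, left_mem_segment ℝ x y⟩
    exact ⟨z, hz, (h x y hxy) ▸ segment_subset_gammaSeg hγ x y (intrinsicInterior_subset hz)⟩
  tfae_have 9 → 5 := by
    intro h x y hxy
    obtain ⟨z, hzi, hzf⟩ := h x y hxy
    obtain ⟨h1, h2⟩ := ne_of_intrinsic_segment hxy hzi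
    exact ⟨z, hzf, by simp [h1, h2]⟩
  tfae_have 12 → 11 := by
    intro h x y hxy
    obtain ⟨z, hz⟩ :=
      Set.Nonempty.intrinsicInterior (gammaSeg_convex hγ x y) ⟨x, left_mem_gammaSeg hγ x y⟩
    exact ⟨z, hz, (h x y hxy) ▸ intrinsicInterior_subset hz⟩
  tfae_have 11 → 5 := by
    intro h x y hxy
    obtain ⟨z, hzi, hzf⟩ := h x y hxy
    obtain ⟨h1, h2⟩ := ne_of_intrinsic_gammaSeg hγ hxy hzi
    exact ⟨z, hzf, by simp [h1, h2]⟩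
  tfae_finish
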